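/- Let M be a hypermodular matroid of rank 4 on ground set E, and let l₁, l₂ be two disjoint coplanar lines of M. Then E can be partitioned into lines, with l₁ and l₂ among them, such that every line of the partition other than l₁, l₂ is coplanar with both l₁ and l₂. -/

import Mathlib

open Set

namespace StickyKantor

variable {α : Type*}

/-- The rank of a set in a matroid, as an integer (junk value `0` when infinite). -/
noncomputable def rk (M : Matroid α) (X : Set α) : ℤ :=
  ((⨆ I ∈ {I : Set α | M.Indep I ∧ I ⊆ X}, I.encard).toNat : ℤ)

/-- The modular defect of a pair of sets. -/
noncomputable def mdefect (M : Matroid α) (X Y : Set α) : ℤ :=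
  rk M X + rk M Y - rk M (X ∪ Y) - rk M (X ∩ Y)

/-- A modular pair of sets. -/
def ModularPair (M : Matroid α) (X Y : Set α) : Prop :=
  rk M X + rk M Y = rk M (X ∪ Y) + rk M (X ∩ Y)

/-- `M'` is an extension of `M`: it has a larger ground set and restricts to `M`. -/
def IsExtension (M' M : Matroid α) : Prop :=
  M.E ⊆ M'.E ∧ M = M'.restrict M.E

/-- A point: a rank-1 flat. -/
def IsPoint (M : Matroid α) (p : Set α) : Prop := M.IsFlat p ∧ rk M p = 1

/-- A line: a rank-2 flat. -/
def IsLine (M : Matroid α) (l : Set α) : Prop := M.IsFlat l ∧ rk M l = 2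

/-- A plane: a rank-3 flat. -/
def IsPlane (M : Matroid α) (e : Set α) : Prop := M.IsFlat e ∧ rk M e = 3

/-- Two lines are coplanar if their join has rank at most 3. -/
def Coplanar (M : Matroid α) (l₁ l₂ : Set α) : Prop := rk M (l₁ ∪ l₂) ≤ 3

/-- A hyperplane: a maximal proper flat. -/
def IsHyperplane (M : Matroid α) (H : Set α) : Prop :=
  M.IsFlat H ∧ H ≠ M.E ∧ ∀ F, M.IsFlat F → H ⊂ F → F = M.E

/-- A matroid is hypermodular if every pair of hyperplanes is a modular pair. -/
def Hypermodular (M : Matroid α) : Prop :=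
  ∀ H₁ H₂, IsHyperplane M H₁ → IsHyperplane M H₂ → ModularPair M H₁ H₂

/-- A matroid is modular if every pair of flats is a modular pair. -/
def Modular (M : Matroid α) : Prop :=
  ∀ F₁ F₂, M.IsFlat F₁ → M.IsFlat F₂ → ModularPair M F₁ F₂

/-- A modular cut: an up-closed family of flats closed under intersections of
modular pairs. -/
def IsModularCut (M : Matroid α) (𝓜 : Set (Set α)) : Prop :=
  (∀ F ∈ 𝓜, M.IsFlat F) ∧
  (∀ F ∈ 𝓜, ∀ F', M.IsFlat F' → F ⊆ F' → F' ∈ 𝓜) ∧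
  (∀ F₁ ∈ 𝓜, ∀ F₂ ∈ 𝓜, ModularPair M F₁ F₂ → F₁ ∩ F₂ ∈ 𝓜)

/-- The principal modular cut of a flat `F`. -/
def principalCut (M : Matroid α) (F : Set α) : Set (Set α) :=
  {G | M.IsFlat G ∧ F ⊆ G}

/-- The modular cut generated by a family of flats. -/
def genCut (M : Matroid α) (A : Set (Set α)) : Set (Set α) :=
  ⋂₀ {𝓜 | IsModularCut M 𝓜 ∧ A ⊆ 𝓜}

/-- A non-modular pair of flats is intersectable if the modular cut it generates is
not the principal modular cut of its intersection. -/
def Intersectable (M : Matroid α) (X Y : Set α) : Prop :=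
  genCut M {X, Y} ≠ principalCut M (X ∩ Y)

/-- A matroid is OTE (only trivially extendable) if every nonempty modular cut
is principal. -/
def OTE (M : Matroid α) : Prop :=
  ∀ 𝓜, IsModularCut M 𝓜 → 𝓜 ≠ ∅ → ∃ F, M.IsFlat F ∧ 𝓜 = principalCut M F

/-- A matroid is sticky if every pair of extensions meeting exactly in its ground set
has an amalgam. -/
def Sticky (M : Matroid α) : Prop :=
  ∀ N₁ N₂ : Matroid α, IsExtension N₁ M → IsExtension N₂ M → N₁.E ∩ N₂.E = M.E →
    ∃ A : Matroid α, A.E = N₁.E ∪ N₂.E ∧ IsExtension A N₁ ∧ IsExtension A N₂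

/-- The function `η` of the amalgam construction. -/
noncomputable def eta (M M₁ M₂ : Matroid α) (X : Set α) : ℤ :=
  rk M₁ (X ∩ M₁.E) + rk M₂ (X ∩ M₂.E) - rk M (X ∩ M.E)

/-- The function `ξ` of the amalgam construction. -/
noncomputable def xi (M M₁ M₂ : Matroid α) (X : Set α) : ℤ :=
  sInf {n : ℤ | ∃ Y, X ⊆ Y ∧ Y ⊆ M₁.E ∪ M₂.E ∧ n = eta M M₁ M₂ Y}

/-- The lattice `𝓛(M₁,M₂)` of sets whose traces on both ground sets are flats. -/
def latticeL (M₁ M₂ : Matroid α) : Set (Set α) :=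
  {X | X ⊆ M₁.E ∪ M₂.E ∧ M₁.IsFlat (X ∩ M₁.E) ∧ M₂.IsFlat (X ∩ M₂.E)}

section Infra

variable {M : Matroid α} {X Y I J F F' : Set α} {x y : α}

lemma closure_flat' (M : Matroid α) (X : Set α) : M.IsFlat (M.closure X) := by
  rw [Matroid.closure_def, sInter_eq_iInter]
  have : Nonempty {F : Set α // F ∈ {F | M.IsFlat F ∧ X ∩ M.E ⊆ F}} :=
    ⟨⟨M.E, M.ground_isFlat, inter_subset_right⟩⟩
  exact Matroid.IsFlat.iInter fun F => F.2.1

lemma flat_inter (h1 : M.IsFlat F) (h2 : M.IsFlat F') : M.IsFlat (F ∩ F') := by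
  rw [inter_eq_iInter]
  exact Matroid.IsFlat.iInter (by rintro (_ | _) <;> simpa)

lemma encard_le_of_basis' (hJ : M.IsBasis' J X) (hI : M.Indep I) (hIX : I ⊆ X) :
    I.encard ≤ J.encard := by
  by_contra h
  push_neg at h
  obtain ⟨e, he, hind⟩ := hJ.indep.augment hI h
  have heq := hJ.eq_of_le (y := insert e J)
    ⟨hind, insert_subset (hIX he.1) hJ.subset⟩ (subset_insert _ _)
  exact he.2 (heq ▸ mem_insert e J)

lemma rk_eq_encard (hI : M.IsBasis' I X) : rk M X = (I.encard.toNat : ℤ) := by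
  have h : (⨆ J ∈ {J : Set α | M.Indep J ∧ J ⊆ X}, J.encard) = I.encard := by
    apply le_antisymm
    · exact iSup₂_le fun J hJ => encard_le_of_basis' hI hJ.1 hJ.2
    · exact le_iSup₂ (f := fun (J : Set α) (_ : J ∈ {J : Set α | M.Indep J ∧ J ⊆ X}) => J.encard)
        I ⟨hI.indep, hI.subset⟩
  rw [rk, h]

lemma rk_eq_ncard (hI : M.IsBasis' I X) : rk M X = (I.ncard : ℤ) := by
  rw [rk_eq_encard hI, Set.ncard_def]

lemma rk_empty (M : Matroid α) : rk M ∅ = 0 := by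
  rw [rk_eq_ncard M.empty_indep.isBasis_self.isBasis', ncard_empty]; rfl

lemma rk_mono (M : Matroid α) [M.RankFinite] (hXY : X ⊆ Y) : rk M X ≤ rk M Y := by
  obtain ⟨I, hI⟩ := M.exists_isBasis' X
  obtain ⟨J, hJ, hIJ⟩ := hI.indep.subset_isBasis'_of_subset (hI.subset.trans hXY)
  rw [rk_eq_ncard hI, rk_eq_ncard hJ]
  exact_mod_cast Set.ncard_le_ncard hIJ hJ.indep.finite

lemma rk_closure_eq (M : Matroid α) (X : Set α) : rk M (M.closure X) = rk M X := by
  obtain ⟨I, hI⟩ := M.exists_isBasis' X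
  rw [rk_eq_encard hI, rk_eq_encard hI.isBasis_closure_right.isBasis']

lemma rk_insert_of_not_mem_closure [M.RankFinite] (hX : X ⊆ M.E) (hx : x ∈ M.E)
    (hxX : x ∉ M.closure X) : rk M (insert x X) = rk M X + 1 := by
  obtain ⟨I, hI⟩ := M.exists_isBasis X hX
  have hxI : x ∉ M.closure I := by rwa [hI.closure_eq_closure]
  have hind : M.Indep (insert x I) ∧ x ∉ I := (hI.indep.notMem_closure_iff hx).mp hxI
  have hb : M.IsBasis (insert x I) (insert x X) := by
    refine hind.1.isBasis_of_subset_of_subset_closure (insert_subset_insert hI.subset) ?_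
    refine insert_subset (M.subset_closure _ hind.1.subset_ground (mem_insert _ _)) ?_
    exact hI.subset_closure.trans (M.closure_subset_closure (subset_insert _ _))
  rw [rk_eq_ncard hb.isBasis', rk_eq_ncard hI.isBasis',
    Set.ncard_insert_of_notMem hind.2 hI.indep.finite]
  push_cast; ring

lemma flat_eq_of_subset_of_rk_le [M.RankFinite] (hF : M.IsFlat F) (hF' : M.IsFlat F') (hss : F ⊆ F')
    (hr : rk M F' ≤ rk M F) : F = F' := by
  obtain ⟨I, hI⟩ := M.exists_isBasis F hF.subset_ground
  obtain ⟨J, hJ, hIJ⟩ := hI.indep.subset_isBasis_of_subset (hI.subset.trans hss) hF'.subset_ground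
  rw [rk_eq_ncard hJ.isBasis', rk_eq_ncard hI.isBasis'] at hr
  have hIJ' : I = J :=
    Set.eq_of_subset_of_ncard_le hIJ (by exact_mod_cast hr) hJ.indep.finite
  refine hss.antisymm ?_
  calc F' ⊆ M.closure J := hJ.subset_closure
    _ = M.closure I := by rw [hIJ']
    _ ⊆ M.closure F := M.closure_subset_closure hI.subset
    _ = F := hF.closure

end Infra

section Geo

variable {M : Matroid α}

lemma IsLine.nonempty {l : Set α} (h : IsLine M l) : l.Nonempty := by
  rw [nonempty_iff_ne_empty]
  rintro rfl
  have h2 := h.2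
  rw [rk_empty] at h2
  norm_num at h2

lemma eq_ground_of_rk_ge [M.RankFinite] (hrank : rk M M.E = 4) {F : Set α} (hF : M.IsFlat F)
    (h : 4 ≤ rk M F) : F = M.E :=
  flat_eq_of_subset_of_rk_le hF M.ground_isFlat hF.subset_ground (by rw [hrank]; exact h)

lemma isHyperplane_of_isPlane [M.RankFinite] (hrank : rk M M.E = 4) {P : Set α}
    (hP : IsPlane M P) : IsHyperplane M P := by
  refine ⟨hP.1, ?_, fun F hF hssub => ?_⟩
  · rintro rfl
    have := hP.2
    rw [hrank] at this
    norm_num at this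
  · refine eq_ground_of_rk_ge hrank hF ?_
    by_contra hlt
    push_neg at hlt
    have heq : P = F := flat_eq_of_subset_of_rk_le hP.1 hF hssub.subset (by rw [hP.2]; linarith)
    exact hssub.ne heq

lemma plane_inter_plane [M.RankFinite] (hhm : Hypermodular M) (hrank : rk M M.E = 4)
    {P₁ P₂ : Set α} (h1 : IsPlane M P₁) (h2 : IsPlane M P₂) (hne : P₁ ≠ P₂) :
    IsLine M (P₁ ∩ P₂) := by
  have hmp := hhm _ _ (isHyperplane_of_isPlane hrank h1) (isHyperplane_of_isPlane hrank h2)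
  have hg : P₁ ∪ P₂ ⊆ M.E := union_subset h1.1.subset_ground h2.1.subset_ground
  have hle : rk M (P₁ ∪ P₂) ≤ 4 := by rw [← hrank]; exact rk_mono M hg
  have hge : 4 ≤ rk M (P₁ ∪ P₂) := by
    by_contra hlt
    push_neg at hlt
    have hP1sub : P₁ ⊆ M.closure (P₁ ∪ P₂) :=
      subset_union_left.trans (M.subset_closure _ hg)
    have heq : P₁ = M.closure (P₁ ∪ P₂) :=
      flat_eq_of_subset_of_rk_le h1.1 (closure_flat' M _) hP1sub
        (by rw [rk_closure_eq, h1.2]; linarith)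
    have hP2sub : P₂ ⊆ M.closure (P₁ ∪ P₂) :=
      subset_union_right.trans (M.subset_closure _ hg)
    rw [← heq] at hP2sub
    exact hne (flat_eq_of_subset_of_rk_le h2.1 h1.1 hP2sub (by rw [h1.2, h2.2])).symm
  have h4 : rk M (P₁ ∪ P₂) = 4 := le_antisymm hle hge
  unfold ModularPair at hmp
  refine ⟨flat_inter h1.1 h2.1, ?_⟩
  rw [h1.2, h2.2, h4] at hmp
  linarith

lemma plane_closure_union [M.RankFinite] {l₁ l₂ : Set α} (h₁ : IsLine M l₁) (h₂ : IsLine M l₂)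
    (hdisj : l₁ ∩ l₂ = ∅) (hcop : Coplanar M l₁ l₂) : IsPlane M (M.closure (l₁ ∪ l₂)) := by
  have hg : l₁ ∪ l₂ ⊆ M.E := union_subset h₁.1.subset_ground h₂.1.subset_ground
  have h3 : rk M (l₁ ∪ l₂) = 3 := by
    refine le_antisymm hcop ?_
    by_contra hlt
    push_neg at hlt
    have heq : l₁ = M.closure (l₁ ∪ l₂) :=
      flat_eq_of_subset_of_rk_le h₁.1 (closure_flat' M _)
        (subset_union_left.trans (M.subset_closure _ hg))
        (by rw [rk_closure_eq]; linarith [h₁.2, rk_mono M (subset_union_left (s := l₁) (t := l₂))])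
    obtain ⟨y, hy⟩ := h₂.nonempty
    have hy1 : y ∈ l₁ := by
      rw [heq]
      exact (subset_union_right.trans (M.subset_closure _ hg)) hy
    have : y ∈ l₁ ∩ l₂ := ⟨hy1, hy⟩
    rw [hdisj] at this
    exact this
  exact ⟨closure_flat' M _, by rw [rk_closure_eq, h3]⟩

lemma plane_insert [M.RankFinite] {l : Set α} {x : α} (hl : IsLine M l) (hx : x ∈ M.E)
    (hxl : x ∉ l) : IsPlane M (M.closure (insert x l)) := by
  have hr : rk M (insert x l) = 3 := by
    rw [rk_insert_of_not_mem_closure hl.1.subset_ground hx (by rwa [hl.1.closure]), hl.2]; norm_num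
  exact ⟨closure_flat' M _, by rw [rk_closure_eq, hr]⟩

lemma A_inter [M.RankFinite] (hhm : Hypermodular M) (hrank : rk M M.E = 4) {l P : Set α}
    (hl : IsLine M l) (hP : IsPlane M P) (hlP : l ⊆ P) {x : α} (hx : x ∈ M.E \ P) :
    M.closure (insert x l) ∩ P = l := by
  have hxl : x ∉ l := fun h => hx.2 (hlP h)
  have hA := plane_insert hl hx.1 hxl
  have hins : insert x l ⊆ M.E := insert_subset hx.1 hl.1.subset_ground
  have hne : M.closure (insert x l) ≠ P := by
    intro h
    exact hx.2 (h ▸ M.subset_closure _ hins (mem_insert _ _))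
  have hline := plane_inter_plane hhm hrank hA hP hne
  have hsub : l ⊆ M.closure (insert x l) ∩ P :=
    subset_inter ((subset_insert x l).trans (M.subset_closure _ hins)) hlP
  exact (flat_eq_of_subset_of_rk_le hl.1 hline.1 hsub (by rw [hl.2, hline.2])).symm

end Geo


section Construct

variable {M : Matroid α} {l₁ l₂ : Set α} {x z p : α}

/-- The line through `x ∉ P` intersecting both `l₁` and `l₂`'s spanned planes. -/
def mset (M : Matroid α) (l₁ l₂ : Set α) (x : α) : Set α :=
  M.closure (insert x l₁) ∩ M.closure (insert x l₂)

/-- The line through `x ∈ P` coplanar with the line `mset M l₁ l₂ z`. -/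
def gset (M : Matroid α) (l₁ l₂ : Set α) (z x : α) : Set α :=
  M.closure (insert x (mset M l₁ l₂ z)) ∩ M.closure (l₁ ∪ l₂)

lemma mset_spec [M.RankFinite] (hhm : Hypermodular M) (hrank : rk M M.E = 4)
    (h₁ : IsLine M l₁) (h₂ : IsLine M l₂) (hdisj : l₁ ∩ l₂ = ∅) (hcop : Coplanar M l₁ l₂)
    (hx : x ∈ M.E \ M.closure (l₁ ∪ l₂)) :
    IsLine M (mset M l₁ l₂ x) ∧ x ∈ mset M l₁ l₂ x ∧
      mset M l₁ l₂ x ∩ M.closure (l₁ ∪ l₂) = ∅ ∧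
      Coplanar M (mset M l₁ l₂ x) l₁ ∧ Coplanar M (mset M l₁ l₂ x) l₂ := by
  have hP := plane_closure_union h₁ h₂ hdisj hcop
  have hg : l₁ ∪ l₂ ⊆ M.E := union_subset h₁.1.subset_ground h₂.1.subset_ground
  have hl₁P : l₁ ⊆ M.closure (l₁ ∪ l₂) := subset_union_left.trans (M.subset_closure _ hg)
  have hl₂P : l₂ ⊆ M.closure (l₁ ∪ l₂) := subset_union_right.trans (M.subset_closure _ hg)
  have hxl₁ : x ∉ l₁ := fun h => hx.2 (hl₁P h)
  have hxl₂ : x ∉ l₂ := fun h => hx.2 (hl₂P h)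
  have hA₁ := plane_insert h₁ hx.1 hxl₁
  have hA₂ := plane_insert h₂ hx.1 hxl₂
  have hins₁ : insert x l₁ ⊆ M.E := insert_subset hx.1 h₁.1.subset_ground
  have hins₂ : insert x l₂ ⊆ M.E := insert_subset hx.1 h₂.1.subset_ground
  have hI₁ : M.closure (insert x l₁) ∩ M.closure (l₁ ∪ l₂) = l₁ :=
    A_inter hhm hrank h₁ hP hl₁P hx
  have hI₂ : M.closure (insert x l₂) ∩ M.closure (l₁ ∪ l₂) = l₂ :=
    A_inter hhm hrank h₂ hP hl₂P hx
  have hne : M.closure (insert x l₁) ≠ M.closure (insert x l₂) := by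
    intro h
    have h12 : l₁ ∪ l₂ ⊆ M.closure (insert x l₁) := by
      refine union_subset ((subset_insert x l₁).trans (M.subset_closure _ hins₁)) ?_
      rw [h]
      exact (subset_insert x l₂).trans (M.subset_closure _ hins₂)
    have hsub : M.closure (l₁ ∪ l₂) ⊆ M.closure (insert x l₁) := by
      calc M.closure (l₁ ∪ l₂) ⊆ M.closure (M.closure (insert x l₁)) :=
            M.closure_subset_closure h12
        _ = M.closure (insert x l₁) := M.closure_closure _
    have heq := flat_eq_of_subset_of_rk_le hP.1 hA₁.1 hsub (by rw [hP.2, hA₁.2])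
    have hxcl : x ∈ M.closure (insert x l₁) := M.subset_closure _ hins₁ (mem_insert _ _)
    rw [← heq] at hxcl
    exact hx.2 hxcl
  have hline := plane_inter_plane hhm hrank hA₁ hA₂ hne
  have hxm : x ∈ mset M l₁ l₂ x :=
    ⟨M.subset_closure _ hins₁ (mem_insert _ _), M.subset_closure _ hins₂ (mem_insert _ _)⟩
  have hmP : mset M l₁ l₂ x ∩ M.closure (l₁ ∪ l₂) = ∅ := by
    rw [eq_empty_iff_forall_notMem]
    rintro q ⟨hq, hqP⟩
    have hq' : q ∈ M.closure (insert x l₁) ∩ M.closure (insert x l₂) := hq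
    have hq1 : q ∈ l₁ := by rw [← hI₁]; exact ⟨hq'.1, hqP⟩
    have hq2 : q ∈ l₂ := by rw [← hI₂]; exact ⟨hq'.2, hqP⟩
    have : q ∈ l₁ ∩ l₂ := ⟨hq1, hq2⟩
    rw [hdisj] at this
    exact this
  refine ⟨hline, hxm, hmP, ?_, ?_⟩
  · show rk M (mset M l₁ l₂ x ∪ l₁) ≤ 3
    have hsub : mset M l₁ l₂ x ∪ l₁ ⊆ M.closure (insert x l₁) :=
      union_subset inter_subset_left ((subset_insert x l₁).trans (M.subset_closure _ hins₁))
    calc rk M (mset M l₁ l₂ x ∪ l₁) ≤ rk M (M.closure (insert x l₁)) := rk_mono M hsub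
      _ = 3 := hA₁.2
  · show rk M (mset M l₁ l₂ x ∪ l₂) ≤ 3
    have hsub : mset M l₁ l₂ x ∪ l₂ ⊆ M.closure (insert x l₂) :=
      union_subset inter_subset_right ((subset_insert x l₂).trans (M.subset_closure _ hins₂))
    calc rk M (mset M l₁ l₂ x ∪ l₂) ≤ rk M (M.closure (insert x l₂)) := rk_mono M hsub
      _ = 3 := hA₂.2

lemma mset_eq [M.RankFinite] (hhm : Hypermodular M) (hrank : rk M M.E = 4)
    (h₁ : IsLine M l₁) (h₂ : IsLine M l₂) (hdisj : l₁ ∩ l₂ = ∅) (hcop : Coplanar M l₁ l₂)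
    (hx : x ∈ M.E \ M.closure (l₁ ∪ l₂)) (hp : p ∈ mset M l₁ l₂ x) :
    p ∈ M.E \ M.closure (l₁ ∪ l₂) ∧ mset M l₁ l₂ p = mset M l₁ l₂ x := by
  obtain ⟨hline, hxm, hmP, -, -⟩ := mset_spec hhm hrank h₁ h₂ hdisj hcop hx
  have hg : l₁ ∪ l₂ ⊆ M.E := union_subset h₁.1.subset_ground h₂.1.subset_ground
  have hl₁P : l₁ ⊆ M.closure (l₁ ∪ l₂) := subset_union_left.trans (M.subset_closure _ hg)
  have hl₂P : l₂ ⊆ M.closure (l₁ ∪ l₂) := subset_union_right.trans (M.subset_closure _ hg)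
  have hpE : p ∈ M.E := hline.1.subset_ground hp
  have hpP : p ∉ M.closure (l₁ ∪ l₂) := by
    intro h
    have : p ∈ mset M l₁ l₂ x ∩ M.closure (l₁ ∪ l₂) := ⟨hp, h⟩
    rw [hmP] at this
    exact this
  refine ⟨⟨hpE, hpP⟩, ?_⟩
  have hp' : p ∈ M.closure (insert x l₁) ∩ M.closure (insert x l₂) := hp
  have hxl₁ : x ∉ l₁ := fun h => hx.2 (hl₁P h)
  have hxl₂ : x ∉ l₂ := fun h => hx.2 (hl₂P h)
  have hpl₁ : p ∉ l₁ := fun h => hpP (hl₁P h)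
  have hpl₂ : p ∉ l₂ := fun h => hpP (hl₂P h)
  have hins₁ : insert x l₁ ⊆ M.E := insert_subset hx.1 h₁.1.subset_ground
  have hins₂ : insert x l₂ ⊆ M.E := insert_subset hx.1 h₂.1.subset_ground
  have hA₁x := plane_insert h₁ hx.1 hxl₁
  have hA₂x := plane_insert h₂ hx.1 hxl₂
  have hA₁p := plane_insert h₁ hpE hpl₁
  have hA₂p := plane_insert h₂ hpE hpl₂
  have hsub₁ : M.closure (insert p l₁) ⊆ M.closure (insert x l₁) := by
    have hss : insert p l₁ ⊆ M.closure (insert x l₁) :=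
      insert_subset hp'.1 ((subset_insert x l₁).trans (M.subset_closure _ hins₁))
    calc M.closure (insert p l₁) ⊆ M.closure (M.closure (insert x l₁)) :=
          M.closure_subset_closure hss
      _ = M.closure (insert x l₁) := M.closure_closure _
  have hsub₂ : M.closure (insert p l₂) ⊆ M.closure (insert x l₂) := by
    have hss : insert p l₂ ⊆ M.closure (insert x l₂) :=
      insert_subset hp'.2 ((subset_insert x l₂).trans (M.subset_closure _ hins₂))
    calc M.closure (insert p l₂) ⊆ M.closure (M.closure (insert x l₂)) :=
          M.closure_subset_closure hss
      _ = M.closure (insert x l₂) := M.closure_closure _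
  have heq₁ : M.closure (insert p l₁) = M.closure (insert x l₁) :=
    flat_eq_of_subset_of_rk_le hA₁p.1 hA₁x.1 hsub₁ (by rw [hA₁p.2, hA₁x.2])
  have heq₂ : M.closure (insert p l₂) = M.closure (insert x l₂) :=
    flat_eq_of_subset_of_rk_le hA₂p.1 hA₂x.1 hsub₂ (by rw [hA₂p.2, hA₂x.2])
  simp only [mset]
  rw [heq₁, heq₂]


lemma gset_spec [M.RankFinite] (hhm : Hypermodular M) (hrank : rk M M.E = 4)
    (h₁ : IsLine M l₁) (h₂ : IsLine M l₂) (hdisj : l₁ ∩ l₂ = ∅) (hcop : Coplanar M l₁ l₂)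
    (hz : z ∈ M.E \ M.closure (l₁ ∪ l₂)) (hx : x ∈ M.closure (l₁ ∪ l₂) \ (l₁ ∪ l₂)) :
    IsLine M (gset M l₁ l₂ z x) ∧ x ∈ gset M l₁ l₂ z x ∧
      gset M l₁ l₂ z x ⊆ M.closure (l₁ ∪ l₂) ∧
      gset M l₁ l₂ z x ∩ l₁ = ∅ ∧ gset M l₁ l₂ z x ∩ l₂ = ∅ ∧
      ∀ p ∈ gset M l₁ l₂ z x,
        p ∈ M.closure (l₁ ∪ l₂) \ (l₁ ∪ l₂) ∧ gset M l₁ l₂ z p = gset M l₁ l₂ z x := by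
  obtain ⟨hm₀, hzm₀, hm₀P, -, -⟩ := mset_spec hhm hrank h₁ h₂ hdisj hcop hz
  have hP := plane_closure_union h₁ h₂ hdisj hcop
  have hg : l₁ ∪ l₂ ⊆ M.E := union_subset h₁.1.subset_ground h₂.1.subset_ground
  have hl₁P : l₁ ⊆ M.closure (l₁ ∪ l₂) := subset_union_left.trans (M.subset_closure _ hg)
  have hl₂P : l₂ ⊆ M.closure (l₁ ∪ l₂) := subset_union_right.trans (M.subset_closure _ hg)
  have hxE : x ∈ M.E := hP.1.subset_ground hx.1
  have hxm₀ : x ∉ mset M l₁ l₂ z := by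
    intro h
    have : x ∈ mset M l₁ l₂ z ∩ M.closure (l₁ ∪ l₂) := ⟨h, hx.1⟩
    rw [hm₀P] at this
    exact this
  have hQ := plane_insert hm₀ hxE hxm₀
  have hm₀E : mset M l₁ l₂ z ⊆ M.E := hm₀.1.subset_ground
  have hinsx : insert x (mset M l₁ l₂ z) ⊆ M.E := insert_subset hxE hm₀E
  have hQne : M.closure (insert x (mset M l₁ l₂ z)) ≠ M.closure (l₁ ∪ l₂) := by
    intro h
    have hzQ : z ∈ M.closure (insert x (mset M l₁ l₂ z)) :=
      M.subset_closure _ hinsx (mem_insert_of_mem _ hzm₀)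
    rw [h] at hzQ
    exact hz.2 hzQ
  have hline : IsLine M (gset M l₁ l₂ z x) := plane_inter_plane hhm hrank hQ hP hQne
  have hxg : x ∈ gset M l₁ l₂ z x :=
    ⟨M.subset_closure _ hinsx (mem_insert _ _), hx.1⟩
  have hgsub : gset M l₁ l₂ z x ⊆ M.closure (l₁ ∪ l₂) := inter_subset_right
  have hm₀Q : mset M l₁ l₂ z ⊆ M.closure (insert x (mset M l₁ l₂ z)) :=
    (subset_insert _ _).trans (M.subset_closure _ hinsx)
  have key : ∀ l, IsLine M l → l ⊆ M.closure (l₁ ∪ l₂) →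
      mset M l₁ l₂ z ⊆ M.closure (insert z l) →
      M.closure (insert z l) ∩ M.closure (l₁ ∪ l₂) = l →
      (l = l₁ ∨ l = l₂) → gset M l₁ l₂ z x ∩ l = ∅ := by
    intro l hl hlP hm₀A hAint hll
    rw [eq_empty_iff_forall_notMem]
    rintro y ⟨hyg, hyl⟩
    have hyg' : y ∈ M.closure (insert x (mset M l₁ l₂ z)) ∩ M.closure (l₁ ∪ l₂) := hyg
    have hyE : y ∈ M.E := hl.1.subset_ground hyl
    have hym₀ : y ∉ mset M l₁ l₂ z := by
      intro h
      have : y ∈ mset M l₁ l₂ z ∩ M.closure (l₁ ∪ l₂) := ⟨h, hlP hyl⟩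
      rw [hm₀P] at this
      exact this
    have hplane := plane_insert hm₀ hyE hym₀
    have hzl : z ∉ l := fun h => hz.2 (hlP h)
    have hA := plane_insert hl hz.1 hzl
    have hinszl : insert z l ⊆ M.E := insert_subset hz.1 hl.1.subset_ground
    have heq1 : M.closure (insert y (mset M l₁ l₂ z)) =
        M.closure (insert x (mset M l₁ l₂ z)) := by
      refine flat_eq_of_subset_of_rk_le hplane.1 hQ.1 ?_ (by rw [hplane.2, hQ.2])
      have hss : insert y (mset M l₁ l₂ z) ⊆ M.closure (insert x (mset M l₁ l₂ z)) :=
        insert_subset hyg'.1 hm₀Q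
      calc M.closure (insert y (mset M l₁ l₂ z))
          ⊆ M.closure (M.closure (insert x (mset M l₁ l₂ z))) := M.closure_subset_closure hss
        _ = M.closure (insert x (mset M l₁ l₂ z)) := M.closure_closure _
    have heq2 : M.closure (insert y (mset M l₁ l₂ z)) = M.closure (insert z l) := by
      refine flat_eq_of_subset_of_rk_le hplane.1 hA.1 ?_ (by rw [hplane.2, hA.2])
      have hss : insert y (mset M l₁ l₂ z) ⊆ M.closure (insert z l) :=
        insert_subset (((subset_insert z l).trans (M.subset_closure _ hinszl)) hyl) hm₀A
      calc M.closure (insert y (mset M l₁ l₂ z))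
          ⊆ M.closure (M.closure (insert z l)) := M.closure_subset_closure hss
        _ = M.closure (insert z l) := M.closure_closure _
    have hxQ : x ∈ M.closure (insert x (mset M l₁ l₂ z)) :=
      M.subset_closure _ hinsx (mem_insert _ _)
    rw [← heq1, heq2] at hxQ
    have hxl : x ∈ l := by rw [← hAint]; exact ⟨hxQ, hx.1⟩
    rcases hll with rfl | rfl
    · exact hx.2 (mem_union_left _ hxl)
    · exact hx.2 (mem_union_right _ hxl)
  have ha₁ : gset M l₁ l₂ z x ∩ l₁ = ∅ :=
    key l₁ h₁ hl₁P inter_subset_left (A_inter hhm hrank h₁ hP hl₁P hz) (Or.inl rfl)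
  have ha₂ : gset M l₁ l₂ z x ∩ l₂ = ∅ :=
    key l₂ h₂ hl₂P inter_subset_right (A_inter hhm hrank h₂ hP hl₂P hz) (Or.inr rfl)
  refine ⟨hline, hxg, hgsub, ha₁, ha₂, ?_⟩
  intro p hp
  have hp' : p ∈ M.closure (insert x (mset M l₁ l₂ z)) ∩ M.closure (l₁ ∪ l₂) := hp
  have hpP : p ∈ M.closure (l₁ ∪ l₂) := hgsub hp
  have hpl₁ : p ∉ l₁ := by
    intro h
    have : p ∈ gset M l₁ l₂ z x ∩ l₁ := ⟨hp, h⟩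
    rw [ha₁] at this
    exact this
  have hpl₂ : p ∉ l₂ := by
    intro h
    have : p ∈ gset M l₁ l₂ z x ∩ l₂ := ⟨hp, h⟩
    rw [ha₂] at this
    exact this
  refine ⟨⟨hpP, fun h => h.elim hpl₁ hpl₂⟩, ?_⟩
  have hpE : p ∈ M.E := hP.1.subset_ground hpP
  have hpm₀ : p ∉ mset M l₁ l₂ z := by
    intro h
    have : p ∈ mset M l₁ l₂ z ∩ M.closure (l₁ ∪ l₂) := ⟨h, hpP⟩
    rw [hm₀P] at this
    exact this
  have hQp := plane_insert hm₀ hpE hpm₀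
  have heq : M.closure (insert p (mset M l₁ l₂ z)) =
      M.closure (insert x (mset M l₁ l₂ z)) := by
    refine flat_eq_of_subset_of_rk_le hQp.1 hQ.1 ?_ (by rw [hQp.2, hQ.2])
    have hss : insert p (mset M l₁ l₂ z) ⊆ M.closure (insert x (mset M l₁ l₂ z)) :=
      insert_subset hp'.1 hm₀Q
    calc M.closure (insert p (mset M l₁ l₂ z))
        ⊆ M.closure (M.closure (insert x (mset M l₁ l₂ z))) := M.closure_subset_closure hss
      _ = M.closure (insert x (mset M l₁ l₂ z)) := M.closure_closure _
  simp only [gset]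
  rw [heq]

end Construct

/-- line partition of the ground set of a hypermodular rank-4 matroid
extending two disjoint coplanar lines. -/
theorem line_partition (M : Matroid α) [M.RankFinite]
    (hhm : Hypermodular M) (hrank : rk M M.E = 4)
    (l₁ l₂ : Set α) (h₁ : IsLine M l₁) (h₂ : IsLine M l₂)
    (hdisj : l₁ ∩ l₂ = ∅) (hcop : Coplanar M l₁ l₂) :
    ∃ Γ : Set (Set α), l₁ ∈ Γ ∧ l₂ ∈ Γ ∧
      (∀ l ∈ Γ, IsLine M l) ∧
      (∀ l ∈ Γ, ∀ l' ∈ Γ, l ≠ l' → l ∩ l' = ∅) ∧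
      ⋃₀ Γ = M.E ∧
      (∀ l ∈ Γ, l ≠ l₁ → l ≠ l₂ → Coplanar M l l₁ ∧ Coplanar M l l₂) := by
  classical
  have hP := plane_closure_union h₁ h₂ hdisj hcop
  have hg : l₁ ∪ l₂ ⊆ M.E := union_subset h₁.1.subset_ground h₂.1.subset_ground
  have hl₁P : l₁ ⊆ M.closure (l₁ ∪ l₂) := subset_union_left.trans (M.subset_closure _ hg)
  have hl₂P : l₂ ⊆ M.closure (l₁ ∪ l₂) := subset_union_right.trans (M.subset_closure _ hg)
  obtain ⟨z, hz⟩ : ∃ z, z ∈ M.E \ M.closure (l₁ ∪ l₂) := by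
    by_contra h
    push_neg at h
    have hsub : M.E ⊆ M.closure (l₁ ∪ l₂) := by
      intro e he
      by_contra hne
      exact h e ⟨he, hne⟩
    have heq : M.closure (l₁ ∪ l₂) = M.E := (hP.1.subset_ground).antisymm hsub
    have h3 := hP.2
    rw [heq, hrank] at h3
    norm_num at h3
  set Γ : Set (Set α) := insert l₁ (insert l₂
    ({l | ∃ x ∈ M.E \ M.closure (l₁ ∪ l₂), l = mset M l₁ l₂ x} ∪
     {l | ∃ x ∈ M.closure (l₁ ∪ l₂) \ (l₁ ∪ l₂), l = gset M l₁ l₂ z x})) with hΓ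
  have hmem : ∀ l, l ∈ Γ ↔ (l = l₁ ∨ l = l₂ ∨
      (∃ x ∈ M.E \ M.closure (l₁ ∪ l₂), l = mset M l₁ l₂ x) ∨
      (∃ x ∈ M.closure (l₁ ∪ l₂) \ (l₁ ∪ l₂), l = gset M l₁ l₂ z x)) := by
    intro l
    rw [hΓ]
    simp only [mem_insert_iff, mem_union, mem_setOf_eq]
  have key : ∀ l ∈ Γ, ∀ p ∈ l, l =
      (if p ∈ l₁ then l₁ else if p ∈ l₂ then l₂
       else if p ∈ M.closure (l₁ ∪ l₂) then gset M l₁ l₂ z p else mset M l₁ l₂ p) := by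
    intro l hl p hp
    rcases (hmem l).1 hl with rfl | rfl | ⟨x, hx, rfl⟩ | ⟨x, hx, rfl⟩
    · rw [if_pos hp]
    · have hpl1 : p ∉ l₁ := by
        intro h
        have hmem2 : p ∈ (∅ : Set α) := hdisj ▸ mem_inter h hp
        exact hmem2
      rw [if_neg hpl1, if_pos hp]
    · obtain ⟨⟨hpE, hpP⟩, hme⟩ := mset_eq hhm hrank h₁ h₂ hdisj hcop hx hp
      have hpl₁ : p ∉ l₁ := fun h => hpP (hl₁P h)
      have hpl₂ : p ∉ l₂ := fun h => hpP (hl₂P h)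
      rw [if_neg hpl₁, if_neg hpl₂, if_neg hpP, hme]
    · obtain ⟨hline, -, -, -, -, hbb⟩ := gset_spec hhm hrank h₁ h₂ hdisj hcop hz hx
      obtain ⟨⟨hpP, hpl⟩, hge⟩ := hbb p hp
      rw [if_neg (fun h => hpl (mem_union_left _ h)),
        if_neg (fun h => hpl (mem_union_right _ h)), if_pos hpP, hge]
  refine ⟨Γ, (hmem l₁).2 (Or.inl rfl), (hmem l₂).2 (Or.inr (Or.inl rfl)), ?_, ?_, ?_, ?_⟩
  · intro l hl
    rcases (hmem l).1 hl with rfl | rfl | ⟨x, hx, rfl⟩ | ⟨x, hx, rfl⟩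
    · exact h₁
    · exact h₂
    · exact (mset_spec hhm hrank h₁ h₂ hdisj hcop hx).1
    · exact (gset_spec hhm hrank h₁ h₂ hdisj hcop hz hx).1
  · intro l hl l' hl' hne
    rw [eq_empty_iff_forall_notMem]
    rintro p ⟨hpl, hpl'⟩
    exact hne ((key l hl p hpl).trans (key l' hl' p hpl').symm)
  · apply subset_antisymm
    · rintro p ⟨l, hl, hpl⟩
      rcases (hmem l).1 hl with rfl | rfl | ⟨x, hx, rfl⟩ | ⟨x, hx, rfl⟩
      · exact h₁.1.subset_ground hpl
      · exact h₂.1.subset_ground hpl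
      · exact (mset_spec hhm hrank h₁ h₂ hdisj hcop hx).1.1.subset_ground hpl
      · exact (gset_spec hhm hrank h₁ h₂ hdisj hcop hz hx).1.1.subset_ground hpl
    · intro p hp
      by_cases hp1 : p ∈ l₁
      · exact ⟨l₁, (hmem l₁).2 (Or.inl rfl), hp1⟩
      by_cases hp2 : p ∈ l₂
      · exact ⟨l₂, (hmem l₂).2 (Or.inr (Or.inl rfl)), hp2⟩
      by_cases hpP : p ∈ M.closure (l₁ ∪ l₂)
      · have hx : p ∈ M.closure (l₁ ∪ l₂) \ (l₁ ∪ l₂) := ⟨hpP, fun h => h.elim hp1 hp2⟩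
        exact ⟨gset M l₁ l₂ z p, (hmem _).2 (Or.inr (Or.inr (Or.inr ⟨p, hx, rfl⟩))),
          (gset_spec hhm hrank h₁ h₂ hdisj hcop hz hx).2.1⟩
      · have hx : p ∈ M.E \ M.closure (l₁ ∪ l₂) := ⟨hp, hpP⟩
        exact ⟨mset M l₁ l₂ p, (hmem _).2 (Or.inr (Or.inr (Or.inl ⟨p, hx, rfl⟩))),
          (mset_spec hhm hrank h₁ h₂ hdisj hcop hx).2.1⟩
  · intro l hl hne1 hne2
    rcases (hmem l).1 hl with rfl | rfl | ⟨x, hx, rfl⟩ | ⟨x, hx, rfl⟩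
    · exact absurd rfl hne1
    · exact absurd rfl hne2
    · obtain ⟨-, -, -, hc1, hc2⟩ := mset_spec hhm hrank h₁ h₂ hdisj hcop hx
      exact ⟨hc1, hc2⟩
    · obtain ⟨-, -, hsub, -, -, -⟩ := gset_spec hhm hrank h₁ h₂ hdisj hcop hz hx
      constructor
      · show rk M (gset M l₁ l₂ z x ∪ l₁) ≤ 3
        have hss : gset M l₁ l₂ z x ∪ l₁ ⊆ M.closure (l₁ ∪ l₂) := union_subset hsub hl₁P
        calc rk M (gset M l₁ l₂ z x ∪ l₁) ≤ rk M (M.closure (l₁ ∪ l₂)) := rk_mono M hss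
          _ = 3 := hP.2
      · show rk M (gset M l₁ l₂ z x ∪ l₂) ≤ 3
        have hss : gset M l₁ l₂ z x ∪ l₂ ⊆ M.closure (l₁ ∪ l₂) := union_subset hsub hl₂P
        calc rk M (gset M l₁ l₂ z x ∪ l₂) ≤ rk M (M.closure (l₁ ∪ l₂)) := rk_mono M hss
          _ = 3 := hP.2
end StickyKantor
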